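/- arXiv:2103.02806 — 7 statements merged into one kernel-verified Lean document; each statement's English description precedes it below -/
import Mathlib

section
/- Let η, ζ > 0 be reals with ζ > η, and let s, u, v, ḡ, p̄ be reals with u ≥ 0, v ≥ 0, ḡ ≥ 0, p̄ ≥ 0. Suppose there exist g, p with 0 ≤ g ≤ ḡ, 0 ≤ p ≤ p̄, g·p = 0, s + u = η·g - ζ·p, and s - v ≥ -ζ·p̄. If g = 0, define g' = 0 and p'(ρᵘ, ρᵛ) = -(s + ρᵘu - ρᵛv)/ζ for (ρᵘ, ρᵛ) ∈ {(0,0),(1,0),(0,1)}. Then for each such activation pair: 0 ≤ p'(ρᵘ,ρᵛ) ≤ p̄, η·g' - ζ·p'(ρᵘ,ρᵛ) = s + ρᵘu - ρᵛv, and g' - p'(ρᵘ,ρᵛ) ≤ g - p. -/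
/-- Case 1 (`g = 0`) of the flow-adjustment construction: with `g' = 0` and
`p' = -(s + ρᵘu - ρᵛv)/ζ`, for each activation pair in `{(0,0),(1,0),(0,1)}` we get
`0 ≤ p' ≤ p̄`, exact energy delivery, and `g' - p' ≤ g - p`. -/
theorem stmt3 (η ζ s u v gbar pbar g p : ℝ)
    (hη : 0 < η) (hζη : η < ζ)
    (hu : 0 ≤ u) (hv : 0 ≤ v) (hgbar : 0 ≤ gbar) (hpbar : 0 ≤ pbar)
    (hg : 0 ≤ g) (hgub : g ≤ gbar) (hp : 0 ≤ p) (hpub : p ≤ pbar)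
    (hcomp : g * p = 0) (hdel : s + u = η * g - ζ * p) (hcut : s - v ≥ -(ζ * pbar))
    (hg0 : g = 0)
    (ρu ρv : ℝ) (hρ : (ρu, ρv) ∈ ({(0, 0), (1, 0), (0, 1)} : Set (ℝ × ℝ))) :
    let g' : ℝ := 0
    let p' : ℝ := -(s + ρu * u - ρv * v) / ζ
    0 ≤ p' ∧ p' ≤ pbar ∧ η * g' - ζ * p' = s + ρu * u - ρv * v ∧ g' - p' ≤ g - p := by
  intro g' p'
  have hζ : 0 < ζ := hη.trans hζη
  have hkey : ζ * p' = -(s + ρu * u - ρv * v) := by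
    show ζ * (-(s + ρu * u - ρv * v) / ζ) = _
    field_simp
  have hg'0 : g' = 0 := rfl
  subst hg0
  simp only [Set.mem_insert_iff, Set.mem_singleton_iff, Prod.mk.injEq] at hρ
  rcases hρ with ⟨h1, h2⟩ | ⟨h1, h2⟩ | ⟨h1, h2⟩ <;> subst h1 <;> subst h2 <;>
    refine ⟨?_, ?_, ?_, ?_⟩ <;> nlinarith [mul_le_mul_of_nonneg_left hpub hζ.le, mul_pos hζ hζ]
end

section
/- Let η, ζ > 0 be reals with ζ > η, and let s, u, v, ḡ, p̄ be reals with u, v, ḡ, p̄ ≥ 0. Suppose there exist g, p with 0 < g ≤ ḡ, p = 0, s + u = η·g, and s - v ≥ -ζ·p̄. For (ρᵘ, ρᵛ) ∈ {(0,0),(1,0),(0,1)}, define y = s + ρᵘu - ρᵛv, g' = max(y,0)/η, and p' = max(-y,0)/ζ. Then 0 ≤ g' ≤ ḡ, 0 ≤ p' ≤ p̄, η·g' - ζ·p' = y, and g' - p' ≤ g - p. -/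
/-- Case 2 (`g > 0`, hence `p = 0`) of the flow-adjustment construction: with
`y = s + ρᵘu - ρᵛv`, `g' = y⁺/η` and `p' = y⁻/ζ`, for each activation pair in
`{(0,0),(1,0),(0,1)}` the adjusted flows stay within bounds, deliver exactly `y`,
and satisfy `g' - p' ≤ g - p`. -/
theorem stmt4 (η ζ s u v gbar pbar g p : ℝ)
    (hη : 0 < η) (hζη : η < ζ)
    (hu : 0 ≤ u) (hv : 0 ≤ v) (hgbar : 0 ≤ gbar) (hpbar : 0 ≤ pbar)
    (hg : 0 < g) (hgub : g ≤ gbar) (hp : p = 0)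
    (hdel : s + u = η * g) (hcut : s - v ≥ -(ζ * pbar))
    (ρu ρv : ℝ) (hρ : (ρu, ρv) ∈ ({(0, 0), (1, 0), (0, 1)} : Set (ℝ × ℝ))) :
    let y : ℝ := s + ρu * u - ρv * v
    let g' : ℝ := max y 0 / η
    let p' : ℝ := max (-y) 0 / ζ
    0 ≤ g' ∧ g' ≤ gbar ∧ 0 ≤ p' ∧ p' ≤ pbar ∧ η * g' - ζ * p' = y ∧ g' - p' ≤ g - p := by
  intro y g' p'
  have hζ : (0:ℝ) < ζ := hη.trans hζη
  have hyub : y ≤ s + u := by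
    simp only [Set.mem_insert_iff, Set.mem_singleton_iff, Prod.mk.injEq] at hρ
    rcases hρ with ⟨h1, h2⟩ | ⟨h1, h2⟩ | ⟨h1, h2⟩ <;> subst h1 <;> subst h2 <;>
      simp [y] <;> nlinarith
  have hylb : -y ≤ ζ * pbar := by
    simp only [Set.mem_insert_iff, Set.mem_singleton_iff, Prod.mk.injEq] at hρ
    rcases hρ with ⟨h1, h2⟩ | ⟨h1, h2⟩ | ⟨h1, h2⟩ <;> subst h1 <;> subst h2 <;>
      simp [y] <;> nlinarith
  have hg'0 : 0 ≤ g' := div_nonneg (le_max_right _ _) hη.le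
  have hp'0 : 0 ≤ p' := div_nonneg (le_max_right _ _) hζ.le
  have hg'g : g' ≤ g := by
    rw [div_le_iff₀ hη, mul_comm]
    exact max_le (hyub.trans_eq hdel) (by nlinarith)
  refine ⟨hg'0, hg'g.trans hgub, hp'0, ?_, ?_, by simp [hp]; linarith⟩
  · rw [div_le_iff₀ hζ, mul_comm]
    exact max_le hylb (by positivity)
  · rcases le_or_gt 0 y with h | h
    · have : max (-y) 0 = 0 := max_eq_right (by linarith)
      simp [g', p', this, max_eq_left h]; field_simp
    · have : max y 0 = 0 := max_eq_right h.le
      simp [g', p', this, max_eq_left (by linarith : (0:ℝ) ≤ -y)]; field_simp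
end

section
/- Consider the linear program (D): maximize α·s + β·u + γ·v + λᵀ(η∘g - ζ∘p) - μᵀ(ζ∘p̄) over α, β, γ ∈ R, λ ∈ R^A, μ ∈ R^A with μ ≥ 0, subject to α·1 + λ + μ = 0, β·1 + λ ≤ 0, and γ·1 - μ ≤ 0, where the data satisfy: g, p, p̄, η, ζ ∈ R^A with 0 ≤ g, 0 ≤ p ≤ p̄, η ≥ 0, ζ ≥ 0; u ≥ 0, v ≥ 0, s + u = ηᵀg - ζᵀp, and s - v ≥ -ζᵀp̄. Then the optimal value of (D) is 0, i.e., every feasible solution has objective value at most 0, and 0 is attained (at the origin). -/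
/-- The dual feasibility LP of the bid-disaggregation argument has optimal value 0:
every feasible `(α, β, γ, λ, μ)` has objective value at most 0, and the origin is
feasible with objective value 0. -/
theorem stmt6 (A : ℕ) (g p pbar η ζ : Fin A → ℝ) (s u v : ℝ)
    (hg : 0 ≤ g) (hp : 0 ≤ p) (hpub : p ≤ pbar) (hη : 0 ≤ η) (hζ : 0 ≤ ζ)
    (hu : 0 ≤ u) (hv : 0 ≤ v)
    (hdel : s + u = ∑ a, η a * g a - ∑ a, ζ a * p a)
    (hcut : s - v ≥ -∑ a, ζ a * pbar a) :
    (∀ (α β γ : ℝ) (lam μ : Fin A → ℝ), 0 ≤ μ →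
      (∀ a, α + lam a + μ a = 0) → (∀ a, β + lam a ≤ 0) → (∀ a, γ - μ a ≤ 0) →
      α * s + β * u + γ * v + (∑ a, lam a * (η a * g a - ζ a * p a))
        - ∑ a, μ a * (ζ a * pbar a) ≤ 0) ∧
    (∃ (α β γ : ℝ) (lam μ : Fin A → ℝ), 0 ≤ μ ∧
      (∀ a, α + lam a + μ a = 0) ∧ (∀ a, β + lam a ≤ 0) ∧ (∀ a, γ - μ a ≤ 0) ∧
      α * s + β * u + γ * v + (∑ a, lam a * (η a * g a - ζ a * p a))
        - ∑ a, μ a * (ζ a * pbar a) = 0) := by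
  constructor
  · intro α β γ lam μ hμ hα hβ hγ
    set Ka : Fin A → ℝ := fun a => η a * g a + ζ a * (pbar a - p a) with hKadef
    set K : ℝ := ∑ a, Ka a with hKdef
    have hKa0 : ∀ a, 0 ≤ Ka a := by
      intro a
      have h1 : 0 ≤ η a * g a := mul_nonneg (hη a) (hg a)
      have h2 : 0 ≤ ζ a * (pbar a - p a) :=
        mul_nonneg (hζ a) (sub_nonneg.2 (hpub a))
      simp only [hKadef]
      linarith
    have hK0 : 0 ≤ K := Finset.sum_nonneg fun a _ => hKa0 a
    have hKsum : K = (∑ a, η a * g a) - (∑ a, ζ a * p a) + ∑ a, ζ a * pbar a := by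
      rw [hKdef, ← Finset.sum_sub_distrib, ← Finset.sum_add_distrib]
      apply Finset.sum_congr rfl
      intro a _
      simp only [hKadef]
      ring
    have huvK : u + v ≤ K := by
      rw [hKsum]; linarith
    set t : ℝ := u / K with htdef
    set r : ℝ := v / K with hrdef
    have ht0 : 0 ≤ t := div_nonneg hu hK0
    have hr0 : 0 ≤ r := div_nonneg hv hK0
    have htr1 : t + r ≤ 1 := by
      rcases eq_or_lt_of_le hK0 with hKz | hKpos
      · have hu0 : u = 0 := by nlinarith
        have hv0 : v = 0 := by nlinarith
        simp [htdef, hrdef, hu0, hv0]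
      · rw [htdef, hrdef, ← add_div, div_le_one hKpos]
        exact huvK
    have htK : t * K = u := by
      rcases eq_or_lt_of_le hK0 with hKz | hKpos
      · have hu0 : u = 0 := by nlinarith
        simp [← hKz, hu0]
      · rw [htdef]; field_simp [ne_of_gt hKpos]
    have hrK : r * K = v := by
      rcases eq_or_lt_of_le hK0 with hKz | hKpos
      · have hv0 : v = 0 := by nlinarith
        simp [← hKz, hv0]
      · rw [hrdef]; field_simp [ne_of_gt hKpos]
    set x : Fin A → ℝ := fun a => (η a * g a - ζ a * p a) - t * Ka a with hxdef
    set y : Fin A → ℝ := fun a => t * Ka a with hydef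
    set z : Fin A → ℝ := fun a => r * Ka a with hzdef
    have hsy : ∑ a, y a = u := by
      rw [hydef]
      simp only []
      rw [← Finset.mul_sum, ← hKdef, htK]
    have hsz : ∑ a, z a = v := by
      rw [hzdef]
      simp only []
      rw [← Finset.mul_sum, ← hKdef, hrK]
    have hsx : ∑ a, x a = s := by
      have : ∑ a, x a = (∑ a, (η a * g a - ζ a * p a)) - ∑ a, y a := by
        rw [← Finset.sum_sub_distrib]
      rw [this, hsy, Finset.sum_sub_distrib]
      linarith
    have key : α * s + β * u + γ * v + (∑ a, lam a * (η a * g a - ζ a * p a))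
        - ∑ a, μ a * (ζ a * pbar a)
        = ∑ a, (x a * (α + lam a + μ a) + y a * (β + lam a) + z a * (γ - μ a)
            - μ a * ((1 - t - r) * Ka a)) := by
      have e1 : ∀ a ∈ Finset.univ, x a * (α + lam a + μ a) + y a * (β + lam a)
          + z a * (γ - μ a) - μ a * ((1 - t - r) * Ka a)
          = α * x a + β * y a + γ * z a
            + (lam a * (η a * g a - ζ a * p a) - μ a * (ζ a * pbar a)) := by
        intro a _
        simp only [hxdef, hydef, hzdef, hKadef]
        ring
      have hax : ∑ a, α * x a = α * s := by rw [← Finset.mul_sum, hsx]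
      have hay : ∑ a, β * y a = β * u := by rw [← Finset.mul_sum, hsy]
      have haz : ∑ a, γ * z a = γ * v := by rw [← Finset.mul_sum, hsz]
      rw [Finset.sum_congr rfl e1, Finset.sum_add_distrib, Finset.sum_add_distrib,
        Finset.sum_add_distrib, Finset.sum_sub_distrib, hax, hay, haz]
      ring
    rw [key]
    apply Finset.sum_nonpos
    intro a _
    have h1 : x a * (α + lam a + μ a) = 0 := by rw [hα a]; ring
    have h2 : y a * (β + lam a) ≤ 0 :=
      mul_nonpos_of_nonneg_of_nonpos (mul_nonneg ht0 (hKa0 a)) (hβ a)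
    have h3 : z a * (γ - μ a) ≤ 0 :=
      mul_nonpos_of_nonneg_of_nonpos (mul_nonneg hr0 (hKa0 a)) (hγ a)
    have h4 : 0 ≤ μ a * ((1 - t - r) * Ka a) :=
      mul_nonneg (hμ a) (mul_nonneg (by linarith) (hKa0 a))
    linarith
  · refine ⟨0, 0, 0, fun _ => 0, fun _ => 0, le_refl _, ?_, ?_, ?_, ?_⟩ <;> simp
end

section
/- Let g, p, p̄, η, ζ ∈ R^A satisfy 0 ≤ g, 0 ≤ p ≤ p̄, η ≥ 0, ζ ≥ 0, and let s ∈ R, u ≥ 0, v ≥ 0 with s + u = ηᵀg - ζᵀp and s - v ≥ -ζᵀp̄. Then there exist vectors s', u', v' ∈ R^A with u' ≥ 0, v' ≥ 0, 1ᵀs' = s, 1ᵀu' = u, 1ᵀv' = v, s' + u' = η∘g - ζ∘p (componentwise), and s' - v' ≥ -ζ∘p̄ (componentwise). -/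
/-- Disaggregation of collective market bids into arc-wise individual bids consistent
with the given flow decisions. -/
theorem stmt7 (A : ℕ) (g p pbar η ζ : Fin A → ℝ)
    (hg : 0 ≤ g) (hp : 0 ≤ p) (hpub : p ≤ pbar) (hη : 0 ≤ η) (hζ : 0 ≤ ζ)
    (s u v : ℝ) (hu : 0 ≤ u) (hv : 0 ≤ v)
    (hdel : s + u = ∑ a, η a * g a - ∑ a, ζ a * p a)
    (hcut : s - v ≥ -∑ a, ζ a * pbar a) :
    ∃ s' u' v' : Fin A → ℝ, 0 ≤ u' ∧ 0 ≤ v' ∧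
      (∑ a, s' a) = s ∧ (∑ a, u' a) = u ∧ (∑ a, v' a) = v ∧
      (∀ a, s' a + u' a = η a * g a - ζ a * p a) ∧
      (∀ a, s' a - v' a ≥ -(ζ a * pbar a)) := by
  set L : Fin A → ℝ := fun a => -(ζ a * pbar a) with hL
  set U : Fin A → ℝ := fun a => η a * g a - ζ a * p a with hU
  have hLU : ∀ a, L a ≤ U a := by
    intro a
    have h1 : 0 ≤ η a * g a := mul_nonneg (hη a) (hg a)
    have h2 : ζ a * p a ≤ ζ a * pbar a := mul_le_mul_of_nonneg_left (hpub a) (hζ a)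
    simp only [hL, hU]; linarith
  set SL : ℝ := ∑ a, L a with hSL
  set SU : ℝ := ∑ a, U a with hSU
  have hSUval : SU = s + u := by
    simp only [hSU, hU, Finset.sum_sub_distrib]; linarith
  have hSLval : SL = -∑ a, ζ a * pbar a := by
    simp only [hSL, hL, Finset.sum_neg_distrib]
  have hsle : s ≤ SU := by linarith
  have hsge : SL ≤ s := by rw [hSLval]; linarith
  set D : ℝ := SU - SL with hD
  have hDsum : D = ∑ a, (U a - L a) := by
    simp [hD, hSU, hSL, Finset.sum_sub_distrib]
  have hDnn : 0 ≤ D := by linarith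
  set t : ℝ := (s - SL) / D with ht
  have htnn : 0 ≤ t := div_nonneg (by linarith) hDnn
  have htle : t ≤ 1 := by
    rcases eq_or_lt_of_le hDnn with h | h
    · simp [ht, ← h]
    · rw [ht, div_le_one h]; linarith
  have htD : t * D = s - SL := by
    rcases eq_or_lt_of_le hDnn with h | h
    · have hs : s = SL := by linarith [hsle, hsge, hD]; 
      simp [← h, hs]
    · rw [ht, div_mul_cancel₀]; exact ne_of_gt h
  set s' : Fin A → ℝ := fun a => L a + t * (U a - L a) with hs'
  set c : Fin A → ℝ := fun a => t * (U a - L a) with hc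
  have hcnn : ∀ a, 0 ≤ c a := fun a => mul_nonneg htnn (by linarith [hLU a])
  have hcsum : ∑ a, c a = s - SL := by
    rw [hc, ← Finset.mul_sum, ← hDsum, htD]
  have hs'sum : ∑ a, s' a = s := by
    simp only [hs', Finset.sum_add_distrib, ← hSL]
    rw [← hc, hcsum]; ring
  set C : ℝ := s - SL with hC
  have hvC : v ≤ C := by rw [hC, hSLval]; linarith
  set r : ℝ := if C = 0 then 0 else v / C with hr
  have hrnn : 0 ≤ r := by
    rw [hr]; split
    · exact le_refl 0
    · exact div_nonneg hv (by linarith)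
  have hrle : r ≤ 1 := by
    rw [hr]; split
    · norm_num
    · rename_i h
      have : 0 < C := lt_of_le_of_ne (by linarith) (Ne.symm h)
      rw [div_le_one this]; exact hvC
  have hrC : r * C = v := by
    rw [hr]; split
    · rename_i h
      have : v = 0 := le_antisymm (h ▸ hvC) hv
      simp [this]
    · rename_i h
      rw [div_mul_cancel₀ _ h]
  refine ⟨s', fun a => U a - s' a, fun a => r * c a, ?_, ?_, hs'sum, ?_, ?_, ?_, ?_⟩
  · intro a
    have : s' a ≤ U a := by
      simp only [hs']
      nlinarith [hLU a, htle, htnn]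
    simpa using this
  · intro a; exact mul_nonneg hrnn (hcnn a)
  · rw [Finset.sum_sub_distrib, hs'sum, ← hSU, hSUval]; ring
  · rw [← Finset.mul_sum, hcsum]; exact hrC
  · intro a; simp only [hs', hU]; ring
  · intro a
    have h1 : r * c a ≤ c a := by
      nlinarith [hcnn a]
    have : s' a - c a = L a := by simp only [hs', hc]; ring
    simp only [hL] at this ⊢
    linarith
end

section
/- Consider two linear programs over variables (s_t, u_t, v_t, g_t, p_t, z_t) for t = 1,...,H with identical objective Σ_t (π̃ˢ_t·Σ_a s_{t,a} + π̃ᵘ_t·Σ_a u_{t,a} + π̃ᵛ_t·Σ_a v_{t,a}) and identical constraints except that the individual problem imposes arc-wise constraints s_t + u_t = η_t∘g_t - ζ_t∘p_t and s_t - v_t ≥ -ζ_t∘p̄_t (componentwise in R^A, with vector bids s_t, u_t, v_t ∈ R^A, u_t, v_t ≥ 0), while the collective problem imposes scalar constraints s_t + u_t = η_tᵀg_t - ζ_tᵀp_t and s_t - v_t ≥ -ζ_tᵀp̄_t (with scalar bids s_t ∈ R, u_t, v_t ≥ 0); the common remaining constraints are 0 ≤ g_t ≤ ḡ_t, 0 ≤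 p_t ≤ p̄_t, 0 ≤ z_t, w ≤ w₀ + Σ_{τ≤t} φ_τ + M(g_τ - p_τ + z_τ) ≤ w̄ for each t, and w_H-target inequality w_d ≤ w₀ + Σ_τ φ_τ + M(g_τ - p_τ + z_τ). Then the two linear programs have the same optimal value (where the objective of the individual problem is evaluated with the aggregate Σ_a s_{t,a} etc.). -/
open Matrix Finset

/-- The reduced individual trading LP (arc-wise bids) and the reduced collective
trading LP (aggregate bids) have the same optimal value. -/
theorem stmt8 (H A R : ℕ)
    (πs πu πv : Fin H → ℝ)
    (η ζ gbar pbar : Fin H → Fin A → ℝ)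
    (hη : ∀ t, 0 ≤ η t) (hζ : ∀ t, 0 ≤ ζ t)
    (hgbar : ∀ t, 0 ≤ gbar t) (hpbar : ∀ t, 0 ≤ pbar t)
    (M : Matrix (Fin R) (Fin A) ℝ)
    (φ : Fin H → Fin R → ℝ) (w0 wlo whi wd : Fin R → ℝ) :
    sSup {x : ℝ | ∃ s u v g p z : Fin H → Fin A → ℝ,
        (∀ t, 0 ≤ u t ∧ 0 ≤ v t ∧ 0 ≤ g t ∧ g t ≤ gbar t ∧
          0 ≤ p t ∧ p t ≤ pbar t ∧ 0 ≤ z t) ∧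
        (∀ t a, s t a + u t a = η t a * g t a - ζ t a * p t a) ∧
        (∀ t a, s t a - v t a ≥ -(ζ t a * pbar t a)) ∧
        (∀ t r, wlo r ≤ w0 r + (∑ τ ∈ univ.filter (· ≤ t),
            (φ τ r + M.mulVec (g τ - p τ + z τ) r)) ∧
          w0 r + (∑ τ ∈ univ.filter (· ≤ t),
            (φ τ r + M.mulVec (g τ - p τ + z τ) r)) ≤ whi r) ∧
        (∀ r, wd r ≤ w0 r + ∑ τ, (φ τ r + M.mulVec (g τ - p τ + z τ) r)) ∧
        x = ∑ t, (πs t * ∑ a, s t a + πu t * ∑ a, u t a + πv t * ∑ a, v t a)}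
    = sSup {x : ℝ | ∃ (s u v : Fin H → ℝ) (g p z : Fin H → Fin A → ℝ),
        (∀ t, 0 ≤ u t ∧ 0 ≤ v t ∧ 0 ≤ g t ∧ g t ≤ gbar t ∧
          0 ≤ p t ∧ p t ≤ pbar t ∧ 0 ≤ z t) ∧
        (∀ t, s t + u t = ∑ a, η t a * g t a - ∑ a, ζ t a * p t a) ∧
        (∀ t, s t - v t ≥ -∑ a, ζ t a * pbar t a) ∧
        (∀ t r, wlo r ≤ w0 r + (∑ τ ∈ univ.filter (· ≤ t),
            (φ τ r + M.mulVec (g τ - p τ + z τ) r)) ∧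
          w0 r + (∑ τ ∈ univ.filter (· ≤ t),
            (φ τ r + M.mulVec (g τ - p τ + z τ) r)) ≤ whi r) ∧
        (∀ r, wd r ≤ w0 r + ∑ τ, (φ τ r + M.mulVec (g τ - p τ + z τ) r)) ∧
        x = ∑ t, (πs t * s t + πu t * u t + πv t * v t)} := by
  congr 1
  ext x
  constructor
  · rintro ⟨s, u, v, g, p, z, hbox, heq, hge, hw, hwd, hx⟩
    refine ⟨fun t => ∑ a, s t a, fun t => ∑ a, u t a, fun t => ∑ a, v t a, g, p, z,
      ?_, ?_, ?_, hw, hwd, hx⟩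
    · intro t
      obtain ⟨hu, hv, h⟩ := hbox t
      exact ⟨Finset.sum_nonneg fun a _ => hu a, Finset.sum_nonneg fun a _ => hv a, h⟩
    · intro t
      rw [← Finset.sum_add_distrib, ← Finset.sum_sub_distrib]
      exact Finset.sum_congr rfl fun a _ => heq t a
    · intro t
      rw [← Finset.sum_sub_distrib, ← Finset.sum_neg_distrib]
      exact Finset.sum_le_sum fun a _ => hge t a
  · rintro ⟨s, u, v, g, p, z, hbox, heq, hge, hw, hwd, hx⟩
    set c : Fin H → Fin A → ℝ :=
      fun t a => η t a * g t a - ζ t a * p t a + ζ t a * pbar t a with hc_def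
    set T : Fin H → ℝ := fun t => ∑ a, c t a with hT_def
    have hc : ∀ t a, 0 ≤ c t a := by
      intro t a
      have h1 : 0 ≤ η t a * g t a := mul_nonneg (hη t a) ((hbox t).2.2.1 a)
      have h2 : ζ t a * p t a ≤ ζ t a * pbar t a :=
        mul_le_mul_of_nonneg_left ((hbox t).2.2.2.2.2.1 a) (hζ t a)
      simp only [hc_def]
      linarith
    have hT : ∀ t, 0 ≤ T t := fun t => Finset.sum_nonneg fun a _ => hc t a
    have hTsum : ∀ t, T t = (∑ a, η t a * g t a - ∑ a, ζ t a * p t a)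
        + ∑ a, ζ t a * pbar t a := by
      intro t
      simp only [hT_def, hc_def, Finset.sum_add_distrib, Finset.sum_sub_distrib]
    have huv : ∀ t, u t + v t ≤ T t := by
      intro t
      have h1 := heq t
      have h2 := hge t
      have h3 := hTsum t
      linarith
    have hu0 : ∀ t, T t = 0 → u t = 0 ∧ v t = 0 := by
      intro t h
      have h1 := (hbox t).1
      have h2 := (hbox t).2.1
      constructor <;> linarith [huv t]
    have hkey : ∀ t (k : ℝ), (T t = 0 → k = 0) → ∑ a, k * c t a / T t = k := by
      intro t k hk
      by_cases h : T t = 0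
      · have : ∀ a ∈ univ, k * c t a / T t = 0 := by
          intro a _
          rw [hk h]; ring
        rw [Finset.sum_congr rfl this]
        simp [hk h]
      · simp_rw [mul_div_assoc, ← Finset.mul_sum, ← Finset.sum_div]
        rw [show (∑ i, c t i) = T t from rfl, div_self h, mul_one]
    refine ⟨fun t a => (η t a * g t a - ζ t a * p t a) - u t * c t a / T t,
      fun t a => u t * c t a / T t, fun t a => v t * c t a / T t, g, p, z,
      ?_, ?_, ?_, hw, hwd, ?_⟩
    · intro t
      obtain ⟨hu, hv, h⟩ := hbox t
      exact ⟨fun a => div_nonneg (mul_nonneg hu (hc t a)) (hT t),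
        fun a => div_nonneg (mul_nonneg hv (hc t a)) (hT t), h⟩
    · intro t a; ring
    · intro t a
      have key : (u t + v t) * c t a / T t ≤ c t a := by
        by_cases h : T t = 0
        · obtain ⟨h1, h2⟩ := hu0 t h
          rw [h1, h2]
          simpa using hc t a
        · have hTpos : 0 < T t := lt_of_le_of_ne (hT t) (Ne.symm h)
          rw [div_le_iff₀ hTpos]
          have := huv t
          nlinarith [hc t a, (hbox t).1, (hbox t).2.1]
      have : u t * c t a / T t + v t * c t a / T t = (u t + v t) * c t a / T t := by ring
      simp only [ge_iff_le, hc_def] at *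
      linarith
    · rw [hx]
      refine Finset.sum_congr rfl fun t _ => ?_
      have hU : ∑ a, u t * c t a / T t = u t :=
        hkey t (u t) fun h => (hu0 t h).1
      have hV : ∑ a, v t * c t a / T t = v t :=
        hkey t (v t) fun h => (hu0 t h).2
      have hS : ∑ a, ((η t a * g t a - ζ t a * p t a) - u t * c t a / T t) = s t := by
        rw [Finset.sum_sub_distrib, hU, Finset.sum_sub_distrib]
        have := heq t
        linarith
      rw [hS, hU, hV]
end

section
/- Let (Ω, F, P) be a probability space and let ρᵘ, ρᵛ : Ω → {0,1} be random variables with ρᵘρᵛ = 0 almost surely and P[ρᵘ = 0, ρᵛ = 1] > 0. Suppose real numbers s, u, v and random variables G, Pm with G ≥ 0 a.s. and Pm ≤ p̄ a.s. (p̄ ∈ R) and positive reals η, ζ satisfy s + ρᵘu - ρᵛv = η·G - ζ·Pm almost surely. Then s - v ≥ -ζ·p̄. -/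
open MeasureTheory

/-- Probabilistic valid-cut: if the energy delivery equation holds almost surely and
the reserve-down activation event `{ρᵘ = 0, ρᵛ = 1}` has positive probability, then
`s - v ≥ -ζ·p̄`. -/
theorem stmt11 {Ω : Type*} [MeasurableSpace Ω] (μ : Measure Ω) [IsProbabilityMeasure μ]
    (ρu ρv : Ω → ℝ)
    (hρu : ∀ᵐ ω ∂μ, ρu ω ∈ ({0, 1} : Set ℝ)) (hρv : ∀ᵐ ω ∂μ, ρv ω ∈ ({0, 1} : Set ℝ))
    (hexcl : ∀ᵐ ω ∂μ, ρu ω * ρv ω = 0)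
    (hpos : 0 < μ {ω | ρu ω = 0 ∧ ρv ω = 1})
    (s u v pbar η ζ : ℝ) (hη : 0 < η) (hζ : 0 < ζ)
    (G Pm : Ω → ℝ) (hG : ∀ᵐ ω ∂μ, 0 ≤ G ω) (hPm : ∀ᵐ ω ∂μ, Pm ω ≤ pbar)
    (hdel : ∀ᵐ ω ∂μ, s + ρu ω * u - ρv ω * v = η * G ω - ζ * Pm ω) :
    s - v ≥ -(ζ * pbar) := by
  have hall : ∀ᵐ ω ∂μ, 0 ≤ G ω ∧ Pm ω ≤ pbar ∧
      s + ρu ω * u - ρv ω * v = η * G ω - ζ * Pm ω := by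
    filter_upwards [hG, hPm, hdel] with ω h1 h2 h3
    exact ⟨h1, h2, h3⟩
  -- find a point in the event where hall holds
  rcases (MeasureTheory.Measure.exists_mem_of_measure_ne_zero_of_ae hpos.ne' (ae_restrict_of_ae hall))
    with ⟨ω, hωE, hG', hPm', hdel'⟩
  have h0 : ρu ω = 0 := hωE.1
  have h1 : ρv ω = 1 := hωE.2
  rw [h0, h1] at hdel'
  simp at hdel'
  nlinarith [mul_nonneg hη.le hG', mul_le_mul_of_nonneg_left hPm' hζ.le]
end

section
/- Let η, ζ, ḡ, p̄ ∈ R^A be nonnegative, g, p ∈ R^A with 0 ≤ g and 0 ≤ p ≤ p̄, and s ∈ R, u ≥ 0, v ≥ 0 with s + u = ηᵀg - ζᵀp and v - s - ζᵀp̄ ≤ 0. Let α, β, γ ∈ R, λ ∈ R^A, μ ≥ 0 satisfy α1 + λ + μ = 0, β1 + λ ≤ 0, γ1 - μ ≤ 0, and set μ̲ = min_a μ_a. Then α·s + β·u + γ·v + λᵀ(η∘g - ζ∘p) - μᵀ(ζ∘p̄) ≤ (β - α - μ̲)·u + μ̲·(v - s - ζᵀp̄) ≤ 0. -/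
/-- Full chain of inequalities bounding the dual objective in Proposition 11. -/
theorem stmt15 (A : ℕ) (η ζ gbar pbar : Fin A → ℝ)
    (hη : 0 ≤ η) (hζ : 0 ≤ ζ) (hgbar : 0 ≤ gbar) (hpbar : 0 ≤ pbar)
    (g p : Fin A → ℝ) (hg : 0 ≤ g) (hp : 0 ≤ p) (hpub : p ≤ pbar)
    (s u v : ℝ) (hu : 0 ≤ u) (hv : 0 ≤ v)
    (hdel : s + u = ∑ a, η a * g a - ∑ a, ζ a * p a)
    (hcut : v - s - ∑ a, ζ a * pbar a ≤ 0)
    (α β γ : ℝ) (lam μ : Fin A → ℝ) (hμ : 0 ≤ μ)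
    (h1 : ∀ a, α + lam a + μ a = 0) (h2 : ∀ a, β + lam a ≤ 0) (h3 : ∀ a, γ - μ a ≤ 0)
    (μlo : ℝ) (hlb : ∀ a, μlo ≤ μ a) (hmem : ∃ a, μ a = μlo) :
    α * s + β * u + γ * v + (∑ a, lam a * (η a * g a - ζ a * p a))
        - ∑ a, μ a * (ζ a * pbar a)
      ≤ (β - α - μlo) * u + μlo * (v - s - ∑ a, ζ a * pbar a) ∧
    (β - α - μlo) * u + μlo * (v - s - ∑ a, ζ a * pbar a) ≤ 0 := by
  obtain ⟨a₀, ha₀⟩ := hmem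
  have hμlo : 0 ≤ μlo := ha₀ ▸ hμ a₀
  have hγ : γ ≤ μlo := by have := h3 a₀; linarith
  have hβα : β - α - μlo ≤ 0 := by have := h1 a₀; have := h2 a₀; linarith
  constructor
  · -- rewrite the lam-sum
    have hlam : ∀ a, lam a = -α - μ a := fun a => by have := h1 a; linarith
    have e1 : (∑ a, lam a * (η a * g a - ζ a * p a))
        = -α * (s + u) - ∑ a, μ a * (η a * g a - ζ a * p a) := by
      rw [hdel]
      have : ∀ a ∈ Finset.univ, lam a * (η a * g a - ζ a * p a)
          = -α * (η a * g a - ζ a * p a) - μ a * (η a * g a - ζ a * p a) := by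
        intro a _; rw [hlam a]; ring
      rw [Finset.sum_congr rfl this, Finset.sum_sub_distrib, ← Finset.mul_sum,
        Finset.mul_sum]
      simp [mul_sub, Finset.sum_sub_distrib, Finset.mul_sum, Finset.sum_add_distrib,
        neg_add, Finset.sum_neg_distrib]
    have hterm : ∀ a ∈ Finset.univ, μlo * (η a * g a - ζ a * p a + ζ a * pbar a)
        ≤ μ a * (η a * g a - ζ a * p a + ζ a * pbar a) := by
      intro a _
      apply mul_le_mul_of_nonneg_right (hlb a)
      have h1' := mul_nonneg (hη a) (hg a)
      have h2' := mul_nonneg (hζ a) (sub_nonneg.2 (hpub a))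
      nlinarith
    have hsum := Finset.sum_le_sum hterm
    have eL : (∑ a, μlo * (η a * g a - ζ a * p a + ζ a * pbar a))
        = μlo * ((∑ a, η a * g a) - (∑ a, ζ a * p a) + ∑ a, ζ a * pbar a) := by
      simp only [mul_add, mul_sub, Finset.sum_add_distrib, Finset.sum_sub_distrib,
        ← Finset.mul_sum]
    have eR : (∑ a, μ a * (η a * g a - ζ a * p a + ζ a * pbar a))
        = (∑ a, μ a * (η a * g a - ζ a * p a)) + ∑ a, μ a * (ζ a * pbar a) := by
      rw [← Finset.sum_add_distrib]
      apply Finset.sum_congr rfl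
      intro a _; ring
    rw [eL, eR] at hsum
    have hγv : γ * v ≤ μlo * v := mul_le_mul_of_nonneg_right hγ hv
    rw [e1]
    nlinarith [hsum, hγv, hdel]
  · have h1' := mul_nonpos_of_nonpos_of_nonneg hβα hu
    have h2' := mul_nonpos_of_nonneg_of_nonpos hμlo hcut
    linarith
end
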